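/- (Markov–Lukács, odd case.) Let $p$ be a univariate real polynomial of degree at most $2k+1$. Then $p(x)\geq 0$ for all $x\in[0,1]$ if and only if there exist polynomials $a$ and $b$, each of degree at most $k$, such that $p(x) = x\,a(x)^2 + (1-x)b(x)^2$. -/

import Mathlib

open Polynomial Filter Set Topology


def MLO (k : ℕ) (p : Polynomial ℝ) : Prop :=
  ∃ a b : Polynomial ℝ, a.degree ≤ (k : ℕ) ∧ b.degree ≤ (k : ℕ) ∧
    p = X * a ^ 2 + (1 - X) * b ^ 2

def MLE (k : ℕ) (p : Polynomial ℝ) : Prop :=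
  ∃ a b : Polynomial ℝ, a.degree ≤ (k : ℕ) ∧ b.degree + 1 ≤ (k : ℕ) ∧
    p = a ^ 2 + (X * (1 - X)) * b ^ 2

lemma deg_one_sub_X : (1 - X : Polynomial ℝ).degree ≤ 1 :=
  (degree_sub_le _ _).trans (by simp)

lemma degN : (X * (1 - X) : Polynomial ℝ).degree ≤ 2 := by
  calc (X * (1 - X) : Polynomial ℝ).degree ≤ 1 + 1 :=
        (degree_mul_le _ _).trans (add_le_add degree_X_le deg_one_sub_X)
    _ = 2 := by norm_num

lemma max_add_one_le {u v m : WithBot ℕ} (hu : u + 1 ≤ m) (hv : v + 1 ≤ m) :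
    max u v + 1 ≤ m := by
  rcases max_cases u v with ⟨h, -⟩ | ⟨h, -⟩ <;> rw [h] <;> assumption

-- E * E
lemma MLE.mulE {k l : ℕ} {p q : Polynomial ℝ} (hp : MLE k p) (hq : MLE l q) :
    MLE (k + l) (p * q) := by
  obtain ⟨a, b, ha, hb, rfl⟩ := hp
  obtain ⟨c, d, hc, hd, rfl⟩ := hq
  refine ⟨a * c - X * (1 - X) * (b * d), a * d + b * c, ?_, ?_, by ring⟩
  · refine (degree_sub_le _ _).trans (max_le ?_ ?_)
    · exact (degree_mul_le _ _).trans <| by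
        refine (add_le_add ha hc).trans ?_; push_cast; rfl
    · calc (X * (1 - X) * (b * d)).degree ≤ (1+1) + (b.degree + d.degree) :=
            (degree_mul_le _ _).trans (add_le_add degN (degree_mul_le _ _))
        _ = (b.degree + 1) + (d.degree + 1) := by ring
        _ ≤ (k : WithBot ℕ) + l := add_le_add hb hd
        _ = ((k + l : ℕ) : WithBot ℕ) := by push_cast; ring
  · refine le_trans (add_le_add_left (degree_add_le _ _) 1) (max_add_one_le ?_ ?_)
    · calc (a * d).degree + 1 ≤ (a.degree + d.degree) + 1 :=
            add_le_add_left (degree_mul_le _ _) 1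
        _ = a.degree + (d.degree + 1) := by ring
        _ ≤ (k : WithBot ℕ) + l := add_le_add ha hd
        _ = ((k + l : ℕ) : WithBot ℕ) := by push_cast; ring
    · calc (b * c).degree + 1 ≤ (b.degree + c.degree) + 1 :=
            add_le_add_left (degree_mul_le _ _) 1
        _ = (b.degree + 1) + c.degree := by ring
        _ ≤ (k : WithBot ℕ) + l := add_le_add hb hc
        _ = ((k + l : ℕ) : WithBot ℕ) := by push_cast; ring

-- E * O
lemma MLE.mulO {k l : ℕ} {p q : Polynomial ℝ} (hp : MLE k p) (hq : MLO l q) :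
    MLO (k + l) (p * q) := by
  obtain ⟨a, b, ha, hb, rfl⟩ := hp
  obtain ⟨c, d, hc, hd, rfl⟩ := hq
  refine ⟨a * c + (1 - X) * (b * d), a * d - X * (b * c), ?_, ?_, by ring⟩
  · refine (degree_add_le _ _).trans (max_le ?_ ?_)
    · exact (degree_mul_le _ _).trans <| (add_le_add ha hc).trans <| by push_cast; rfl
    · calc ((1 - X) * (b * d)).degree ≤ 1 + (b.degree + d.degree) :=
            (degree_mul_le _ _).trans (add_le_add deg_one_sub_X (degree_mul_le _ _))
        _ = (b.degree + 1) + d.degree := by ring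
        _ ≤ (k : WithBot ℕ) + l := add_le_add hb hd
        _ = ((k + l : ℕ) : WithBot ℕ) := by push_cast; ring
  · refine (degree_sub_le _ _).trans (max_le ?_ ?_)
    · exact (degree_mul_le _ _).trans <| (add_le_add ha hd).trans <| by push_cast; rfl
    · calc (X * (b * c)).degree ≤ 1 + (b.degree + c.degree) :=
            (degree_mul_le _ _).trans (add_le_add degree_X_le (degree_mul_le _ _))
        _ = (b.degree + 1) + c.degree := by ring
        _ ≤ (k : WithBot ℕ) + l := add_le_add hb hc
        _ = ((k + l : ℕ) : WithBot ℕ) := by push_cast; ring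

-- O * O
lemma MLO.mulO {k l : ℕ} {p q : Polynomial ℝ} (hp : MLO k p) (hq : MLO l q) :
    MLE (k + l + 1) (p * q) := by
  obtain ⟨a, b, ha, hb, rfl⟩ := hp
  obtain ⟨c, d, hc, hd, rfl⟩ := hq
  refine ⟨X * (a * c) + (1 - X) * (b * d), a * d - b * c, ?_, ?_, by ring⟩
  · refine (degree_add_le _ _).trans (max_le ?_ ?_)
    · calc (X * (a * c)).degree ≤ 1 + (a.degree + c.degree) :=
            (degree_mul_le _ _).trans (add_le_add degree_X_le (degree_mul_le _ _))
        _ ≤ 1 + ((k : WithBot ℕ) + l) := add_le_add_right (add_le_add ha hc) 1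
        _ = ((k + l + 1 : ℕ) : WithBot ℕ) := by push_cast; ring
    · calc ((1 - X) * (b * d)).degree ≤ 1 + (b.degree + d.degree) :=
            (degree_mul_le _ _).trans (add_le_add deg_one_sub_X (degree_mul_le _ _))
        _ ≤ 1 + ((k : WithBot ℕ) + l) := add_le_add_right (add_le_add hb hd) 1
        _ = ((k + l + 1 : ℕ) : WithBot ℕ) := by push_cast; ring
  · refine le_trans (add_le_add_left (degree_sub_le _ _) 1) (max_add_one_le ?_ ?_)
    · calc (a * d).degree + 1 ≤ (a.degree + d.degree) + 1 :=
            add_le_add_left (degree_mul_le _ _) 1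
        _ ≤ ((k : WithBot ℕ) + l) + 1 := add_le_add_left (add_le_add ha hd) 1
        _ = ((k + l + 1 : ℕ) : WithBot ℕ) := by push_cast; ring
    · calc (b * c).degree + 1 ≤ (b.degree + c.degree) + 1 :=
            add_le_add_left (degree_mul_le _ _) 1
        _ ≤ ((k : WithBot ℕ) + l) + 1 := add_le_add_left (add_le_add hb hc) 1
        _ = ((k + l + 1 : ℕ) : WithBot ℕ) := by push_cast; ring

-- E → O
lemma MLE.toO {k : ℕ} {p : Polynomial ℝ} (hp : MLE k p) : MLO k p := by
  obtain ⟨a, b, ha, hb, rfl⟩ := hp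
  refine ⟨a + (1 - X) * b, a - X * b, ?_, ?_, by ring⟩
  · refine (degree_add_le _ _).trans (max_le ha ?_)
    calc ((1 - X) * b).degree ≤ 1 + b.degree :=
          (degree_mul_le _ _).trans (add_le_add_left deg_one_sub_X _)
      _ = b.degree + 1 := by ring
      _ ≤ (k : WithBot ℕ) := hb
  · refine (degree_sub_le _ _).trans (max_le ha ?_)
    calc (X * b).degree ≤ 1 + b.degree :=
          (degree_mul_le _ _).trans (add_le_add_left degree_X_le _)
      _ = b.degree + 1 := by ring
      _ ≤ (k : WithBot ℕ) := hb

lemma MLO.mono {k l : ℕ} {p : Polynomial ℝ} (hp : MLO k p) (hkl : k ≤ l) : MLO l p := by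
  obtain ⟨a, b, ha, hb, rfl⟩ := hp
  exact ⟨a, b, ha.trans (by exact_mod_cast hkl), hb.trans (by exact_mod_cast hkl), rfl⟩

lemma MLE.const {c : ℝ} (hc : 0 ≤ c) : MLE 0 (C c) := by
  refine ⟨C (Real.sqrt c), 0, degree_C_le, by simp, ?_⟩
  have : C (Real.sqrt c) ^ 2 = C c := by rw [← C_pow, Real.sq_sqrt hc]
  rw [this]; ring

lemma MLO.linL {r : ℝ} (hr : r ≤ 0) : MLO 0 (X - C r) := by
  refine ⟨C (Real.sqrt (1 - r)), C (Real.sqrt (-r)), degree_C_le, degree_C_le, ?_⟩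
  rw [← C_pow, ← C_pow, Real.sq_sqrt (by linarith), Real.sq_sqrt (by linarith),
    C_sub, C_neg, C_1]
  ring

lemma MLO.linR {r : ℝ} (hr : 1 ≤ r) : MLO 0 (C r - X) := by
  refine ⟨C (Real.sqrt (r - 1)), C (Real.sqrt r), degree_C_le, degree_C_le, ?_⟩
  rw [← C_pow, ← C_pow, Real.sq_sqrt (by linarith), Real.sq_sqrt (by linarith),
    C_sub, C_1]
  ring

lemma MLE.sq {r : ℝ} : MLE 1 ((X - C r) ^ 2) := by
  refine ⟨X - C r, 0, ?_, by simp, by ring⟩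
  exact (degree_sub_le _ _).trans (max_le degree_X_le (degree_C_le.trans (by norm_num)))

lemma MLE.quad {b c : ℝ} (h : b ^ 2 < 4 * c) : MLE 1 (X ^ 2 + C b * X + C c) := by
  set D : ℝ := (4 * c + 2 * b) ^ 2 + 4 * (4 * c - b ^ 2) with hD
  have hD0 : 0 ≤ D := by nlinarith
  have hsD : Real.sqrt D ^ 2 = D := Real.sq_sqrt hD0
  have hsD0 : 0 ≤ Real.sqrt D := Real.sqrt_nonneg _
  set t : ℝ := ((4 * c + 2 * b) + Real.sqrt D) / 2 with ht
  have ht0 : 0 ≤ t := by nlinarith [sq_nonneg (Real.sqrt D + (4 * c + 2 * b))]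
  have htkey : t ^ 2 = (4 * c + 2 * b) * t + (4 * c - b ^ 2) := by
    rw [ht]; nlinarith [hsD]
  have h1t : (0:ℝ) < 1 + t := by linarith
  set s : ℝ := (t - b) / (2 * (1 + t)) with hs
  have k2 : t - 2 * ((1 + t) * s) = b := by
    rw [hs]; field_simp; ring
  have h4 : (t - b) ^ 2 = 4 * c * (1 + t) := by nlinarith [htkey]
  have k3 : (1 + t) * s ^ 2 = c := by
    rw [hs]; field_simp; nlinarith [h4, sq_nonneg (1 + t)]
  refine ⟨C (Real.sqrt (1 + t)) * (X - C s), C (Real.sqrt t), ?_, ?_, ?_⟩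
  · refine (degree_mul_le _ _).trans ?_
    calc (C (Real.sqrt (1 + t))).degree + (X - C s).degree ≤ 0 + 1 :=
          add_le_add degree_C_le ((degree_sub_le _ _).trans
            (max_le degree_X_le (degree_C_le.trans (by norm_num))))
      _ = 1 := by norm_num
  · calc (C (Real.sqrt t)).degree + 1 ≤ 0 + 1 := add_le_add_left degree_C_le 1
      _ = 1 := by norm_num
  · have e1 : (C (Real.sqrt (1 + t))) ^ 2 = 1 + C t := by
      rw [← C_pow, Real.sq_sqrt (le_of_lt h1t)]; push_cast [C_add, C_1]; ring
    have e2 : (C (Real.sqrt t)) ^ 2 = C t := by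
      rw [← C_pow, Real.sq_sqrt ht0]
    rw [mul_pow, e1, e2]
    have k2' : C t - 2 * ((1 + C t) * C s) = C b := by
      rw [← C_1, ← C_add, ← C_mul, show ((2:Polynomial ℝ) = C 2) from rfl, ← C_mul, ← C_sub, k2]
    have k3' : (1 + C t) * C s ^ 2 = C c := by
      rw [← C_pow, ← C_1, ← C_add, ← C_mul, k3]
    linear_combination -(X : Polynomial ℝ) * k2' - k3'


lemma limR (q : Polynomial ℝ) {r s : ℝ} (hrs : r < s)
    (h : ∀ x, r < x → x < s → 0 ≤ q.eval x) : 0 ≤ q.eval r := by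
  have hT : Tendsto (fun x => q.eval x) (𝓝[>] r) (𝓝 (q.eval r)) :=
    (q.continuous.continuousAt).mono_left nhdsWithin_le_nhds
  refine ge_of_tendsto hT ?_
  filter_upwards [Ioo_mem_nhdsGT_of_mem (⟨le_refl r, hrs⟩ : r ∈ Ico r s)] with x hx
  exact h x hx.1 hx.2

lemma limL (q : Polynomial ℝ) {r s : ℝ} (hrs : s < r)
    (h : ∀ x, s < x → x < r → 0 ≤ q.eval x) : 0 ≤ q.eval r := by
  have hT : Tendsto (fun x => q.eval x) (𝓝[<] r) (𝓝 (q.eval r)) :=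
    (q.continuous.continuousAt).mono_left nhdsWithin_le_nhds
  refine ge_of_tendsto hT ?_
  filter_upwards [Ioo_mem_nhdsLT_of_mem (⟨hrs, le_refl r⟩ : r ∈ Ioc s r)] with x hx
  exact h x hx.1 hx.2

lemma factor_out {p : Polynomial ℝ} {r : ℝ} (h : p.eval r = 0) :
    ∃ q, p = (X - C r) * q := dvd_iff_isRoot.2 h


lemma monic_quad_form {g : Polynomial ℝ} (hm : g.Monic) (h2 : g.natDegree = 2) :
    g = X ^ 2 + C (g.coeff 1) * X + C (g.coeff 0) := by
  ext n
  have hc2 : g.coeff 2 = 1 := by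
    have := hm.coeff_natDegree; rwa [h2] at this
  rcases n with _ | _ | _ | n
  · simp [coeff_add, coeff_X_pow, coeff_C_mul, coeff_X, coeff_C]
  · simp [coeff_add, coeff_X_pow, coeff_C_mul, coeff_X, coeff_C]
  · simp [coeff_add, coeff_X_pow, coeff_C_mul, coeff_X, coeff_C, hc2]
  · have : g.coeff (n + 3) = 0 := coeff_eq_zero_of_natDegree_lt (by omega)
    simp [coeff_add, coeff_X_pow, coeff_C_mul, coeff_X, coeff_C, this]

lemma monic_deg_one_root {g : Polynomial ℝ} (hm : g.Monic) (h1 : g.natDegree = 1) :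
    ∃ x, g.eval x = 0 := by
  have hdeg : g.degree = 1 := by
    rw [degree_eq_natDegree hm.ne_zero, h1]; rfl
  obtain ⟨x, hx⟩ := exists_root_of_degree_eq_one hdeg
  exact ⟨x, hx⟩

lemma ML_base {p : Polynomial ℝ} (h0 : p.natDegree = 0) (hpos : 0 ≤ p.eval 0) :
    (Even p.natDegree ∧ MLE (p.natDegree / 2) p) ∨
      (Odd p.natDegree ∧ MLO (p.natDegree / 2) p) := by
  left
  have hform := Polynomial.eq_C_of_natDegree_le_zero (le_of_eq h0)
  have hc : 0 ≤ p.coeff 0 := by rwa [Polynomial.coeff_zero_eq_eval_zero]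
  rw [h0]
  exact ⟨Even.zero, hform ▸ MLE.const hc⟩

lemma ML_main : ∀ (n : ℕ) (p : Polynomial ℝ), p.natDegree ≤ n → p ≠ 0 →
    (∀ x ∈ Set.Icc (0:ℝ) 1, 0 ≤ p.eval x) →
    (Even p.natDegree ∧ MLE (p.natDegree / 2) p) ∨
      (Odd p.natDegree ∧ MLO (p.natDegree / 2) p) := by
  intro n
  induction n with
  | zero =>
    intro p hd hp0 hpos
    exact ML_base (Nat.le_zero.1 hd) (hpos 0 ⟨le_refl _, zero_le_one⟩)
  | succ n ih =>
    intro p hd hp0 hpos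
    by_cases h0 : p.natDegree = 0
    · exact ML_base h0 (hpos 0 ⟨le_refl _, zero_le_one⟩)
    by_cases hroot : ∃ r : ℝ, p.eval r = 0
    · obtain ⟨r, hr⟩ := hroot
      by_cases hr01 : 0 < r ∧ r < 1
      · -- interior root: double root
        obtain ⟨q1, hq1⟩ : ∃ q, p = (X - C r) * q := dvd_iff_isRoot.2 hr
        have heval1 : ∀ x : ℝ, p.eval x = (x - r) * q1.eval x := by
          intro x; rw [hq1]; simp
        have hq1r : q1.eval r = 0 := by
          have hge : 0 ≤ q1.eval r := by
            refine limR q1 hr01.2 (fun x hx1 hx2 => ?_)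
            have hp := hpos x ⟨by linarith [hr01.1], le_of_lt hx2⟩
            nlinarith [heval1 x]
          have hle : 0 ≤ (-q1).eval r := by
            refine limL (-q1) hr01.1 (fun x hx1 hx2 => ?_)
            have hp := hpos x ⟨le_of_lt hx1, by linarith [hr01.2]⟩
            have := heval1 x
            simp only [eval_neg]
            nlinarith
          simp only [eval_neg] at hle
          linarith
        obtain ⟨q, hq⟩ : ∃ q, q1 = (X - C r) * q := dvd_iff_isRoot.2 hq1r
        have hpq : p = (X - C r) ^ 2 * q := by rw [hq1, hq]; ring
        have heval : ∀ x : ℝ, p.eval x = (x - r) ^ 2 * q.eval x := by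
          intro x; rw [hpq]; simp
        have hq0 : q ≠ 0 := by
          rintro rfl; exact hp0 (by rw [hpq, mul_zero])
        have hdq : p.natDegree = 2 + q.natDegree := by
          rw [hpq, natDegree_mul (pow_ne_zero _ (X_sub_C_ne_zero r)) hq0,
            natDegree_pow, natDegree_X_sub_C]
        have hqpos : ∀ x ∈ Set.Icc (0:ℝ) 1, 0 ≤ q.eval x := by
          have hne : ∀ x ∈ Set.Icc (0:ℝ) 1, x ≠ r → 0 ≤ q.eval x := by
            intro x hx hxr
            have hp := hpos x hx
            have hne0 : x - r ≠ 0 := sub_ne_zero.2 hxr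
            have h2 : (0:ℝ) < (x - r)^2 := by positivity
            nlinarith [heval x]
          intro x hx
          by_cases hxr : x = r
          · subst hxr
            exact limR q hr01.2 (fun y hy1 hy2 =>
              hne y ⟨by linarith [hr01.1], le_of_lt hy2⟩ (ne_of_gt hy1))
          · exact hne x hx hxr
        have hqd : q.natDegree ≤ n := by omega
        have hsq : MLE 1 ((X - C r) ^ 2) := MLE.sq
        rcases ih q hqd hq0 hqpos with ⟨he, hE⟩ | ⟨ho, hO⟩
        · left
          obtain ⟨m, hm⟩ := he
          have h1 : MLE (1 + q.natDegree / 2) ((X - C r) ^ 2 * q) := hsq.mulE hE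
          rw [← hpq] at h1
          have hidx : 1 + q.natDegree / 2 = p.natDegree / 2 := by omega
          rw [hidx] at h1
          exact ⟨⟨m + 1, by omega⟩, h1⟩
        · right
          obtain ⟨m, hm⟩ := ho
          have h1 : MLO (1 + q.natDegree / 2) ((X - C r) ^ 2 * q) := hsq.mulO hO
          rw [← hpq] at h1
          have hidx : 1 + q.natDegree / 2 = p.natDegree / 2 := by omega
          rw [hidx] at h1
          exact ⟨⟨m + 1, by omega⟩, h1⟩
      · rcases le_or_gt r 0 with hrle | hrgt
        · -- root at r ≤ 0
          obtain ⟨q, hq⟩ : ∃ q, p = (X - C r) * q := dvd_iff_isRoot.2 hr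
          have heval : ∀ x : ℝ, p.eval x = (x - r) * q.eval x := by
            intro x; rw [hq]; simp
          have hq0 : q ≠ 0 := by
            rintro rfl; exact hp0 (by rw [hq, mul_zero])
          have hdq : p.natDegree = 1 + q.natDegree := by
            rw [hq, natDegree_mul (X_sub_C_ne_zero r) hq0, natDegree_X_sub_C]
          have hq' : ∀ x : ℝ, 0 < x → x ≤ 1 → 0 ≤ q.eval x := by
            intro x h1 h2
            have hp := hpos x ⟨le_of_lt h1, h2⟩
            nlinarith [heval x]
          have hqpos : ∀ x ∈ Set.Icc (0:ℝ) 1, 0 ≤ q.eval x := by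
            intro x hx
            rcases eq_or_lt_of_le hx.1 with hx0 | hx0
            · rw [← hx0]
              exact limR q zero_lt_one (fun y hy1 hy2 => hq' y hy1 (le_of_lt hy2))
            · exact hq' x hx0 hx.2
          have hqd : q.natDegree ≤ n := by omega
          have hlin : MLO 0 (X - C r) := MLO.linL hrle
          rcases ih q hqd hq0 hqpos with ⟨he, hE⟩ | ⟨ho, hO⟩
          · right
            obtain ⟨m, hm⟩ := he
            have h1 : MLO (q.natDegree / 2 + 0) (q * (X - C r)) := hE.mulO hlin
            rw [mul_comm, ← hq] at h1
            have hidx : q.natDegree / 2 + 0 = p.natDegree / 2 := by omega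
            rw [hidx] at h1
            exact ⟨⟨m, by omega⟩, h1⟩
          · left
            obtain ⟨m, hm⟩ := ho
            have h1 : MLE (0 + q.natDegree / 2 + 1) ((X - C r) * q) := hlin.mulO hO
            rw [← hq] at h1
            have hidx : 0 + q.natDegree / 2 + 1 = p.natDegree / 2 := by omega
            rw [hidx] at h1
            exact ⟨⟨m + 1, by omega⟩, h1⟩
        · -- root at r ≥ 1
          have hrge : 1 ≤ r := by
            by_contra hcon; push_neg at hcon; exact hr01 ⟨hrgt, hcon⟩
          obtain ⟨q0, hq0'⟩ : ∃ q, p = (X - C r) * q := dvd_iff_isRoot.2 hr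
          set q : Polynomial ℝ := -q0 with hqdef
          have hq : p = (C r - X) * q := by rw [hq0', hqdef]; ring
          have heval : ∀ x : ℝ, p.eval x = (r - x) * q.eval x := by
            intro x; rw [hq]; simp
          have hq0 : q ≠ 0 := by
            intro hcon; rw [hcon, mul_zero] at hq; exact hp0 hq
          have hCrX : (C r - X : Polynomial ℝ) ≠ 0 := by
            have hng : (C r - X : Polynomial ℝ) = -(X - C r) := by ring
            rw [hng, neg_ne_zero]
            exact X_sub_C_ne_zero r
          have hdCrX : (C r - X : Polynomial ℝ).natDegree = 1 := by
            have : (C r - X : Polynomial ℝ) = -(X - C r) := by ring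
            rw [this, natDegree_neg, natDegree_X_sub_C]
          have hdq : p.natDegree = 1 + q.natDegree := by
            rw [hq, natDegree_mul hCrX hq0, hdCrX]
          have hq' : ∀ x : ℝ, 0 ≤ x → x < 1 → 0 ≤ q.eval x := by
            intro x h1 h2
            have hp := hpos x ⟨h1, le_of_lt h2⟩
            nlinarith [heval x]
          have hqpos : ∀ x ∈ Set.Icc (0:ℝ) 1, 0 ≤ q.eval x := by
            intro x hx
            rcases eq_or_lt_of_le hx.2 with hx1 | hx1
            · rw [hx1]
              exact limL q zero_lt_one (fun y hy1 hy2 => hq' y (le_of_lt hy1) hy2)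
            · exact hq' x hx.1 hx1
          have hqd : q.natDegree ≤ n := by omega
          have hlin : MLO 0 (C r - X) := MLO.linR hrge
          rcases ih q hqd hq0 hqpos with ⟨he, hE⟩ | ⟨ho, hO⟩
          · right
            obtain ⟨m, hm⟩ := he
            have h1 : MLO (q.natDegree / 2 + 0) (q * (C r - X)) := hE.mulO hlin
            rw [mul_comm, ← hq] at h1
            have hidx : q.natDegree / 2 + 0 = p.natDegree / 2 := by omega
            rw [hidx] at h1
            exact ⟨⟨m, by omega⟩, h1⟩
          · left
            obtain ⟨m, hm⟩ := ho
            have h1 : MLE (0 + q.natDegree / 2 + 1) ((C r - X) * q) := hlin.mulO hO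
            rw [← hq] at h1
            have hidx : 0 + q.natDegree / 2 + 1 = p.natDegree / 2 := by omega
            rw [hidx] at h1
            exact ⟨⟨m + 1, by omega⟩, h1⟩
    · -- no real root: irreducible quadratic factor
      push_neg at hroot
      have hu : ¬IsUnit p := not_isUnit_of_natDegree_pos p (by omega)
      obtain ⟨g, hgm, hgi, hgd⟩ := p.exists_monic_irreducible_factor hu
      obtain ⟨q, hq⟩ := hgd
      have hg0 : g ≠ 0 := hgm.ne_zero
      have hgroot : ∀ x : ℝ, g.eval x ≠ 0 := by
        intro x hx
        exact hroot x (by rw [hq]; simp [hx])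
      have hgnd : g.natDegree = 1 ∨ g.natDegree = 2 := by
        have h1 := hgi.natDegree_pos
        have h2 := hgi.natDegree_le_two
        omega
      rcases hgnd with hg1 | hg2
      · obtain ⟨x, hx⟩ := monic_deg_one_root hgm hg1
        exact absurd hx (hgroot x)
      · set b : ℝ := g.coeff 1
        set c : ℝ := g.coeff 0
        have hform : g = X ^ 2 + C b * X + C c := monic_quad_form hgm hg2
        have hgeval : ∀ x : ℝ, g.eval x = x ^ 2 + b * x + c := by
          intro x; rw [hform]; simp
        have hbc : b ^ 2 < 4 * c := by
          by_contra hcon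
          push_neg at hcon
          have hd0 : (0:ℝ) ≤ b ^ 2 - 4 * c := by linarith
          have hsq := Real.sq_sqrt hd0
          apply hgroot ((-b + Real.sqrt (b ^ 2 - 4 * c)) / 2)
          rw [hgeval]; nlinarith [hsq]
        have hgpos : ∀ x : ℝ, 0 < g.eval x := by
          intro x
          rw [hgeval]
          nlinarith [sq_nonneg (x + b / 2)]
        have hq0 : q ≠ 0 := by
          rintro rfl; exact hp0 (by rw [hq, mul_zero])
        have hdq : p.natDegree = 2 + q.natDegree := by
          rw [hq, natDegree_mul hg0 hq0, hg2]
        have hqpos : ∀ x ∈ Set.Icc (0:ℝ) 1, 0 ≤ q.eval x := by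
          intro x hx
          have hp := hpos x hx
          have hpe : p.eval x = g.eval x * q.eval x := by rw [hq]; simp
          nlinarith [hgpos x]
        have hqd : q.natDegree ≤ n := by omega
        have hquad : MLE 1 g := by rw [hform]; exact MLE.quad hbc
        rcases ih q hqd hq0 hqpos with ⟨he, hE⟩ | ⟨ho, hO⟩
        · left
          obtain ⟨m, hm⟩ := he
          have h1 : MLE (1 + q.natDegree / 2) (g * q) := hquad.mulE hE
          rw [← hq] at h1
          have hidx : 1 + q.natDegree / 2 = p.natDegree / 2 := by omega
          rw [hidx] at h1
          exact ⟨⟨m + 1, by omega⟩, h1⟩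
        · right
          obtain ⟨m, hm⟩ := ho
          have h1 : MLO (1 + q.natDegree / 2) (g * q) := hquad.mulO hO
          rw [← hq] at h1
          have hidx : 1 + q.natDegree / 2 = p.natDegree / 2 := by omega
          rw [hidx] at h1
          exact ⟨⟨m + 1, by omega⟩, h1⟩

theorem markov_lukacs_odd (k : ℕ) (p : Polynomial ℝ)
    (hdeg : p.degree ≤ (2 * k + 1 : ℕ)) :
    (∀ x ∈ Set.Icc (0 : ℝ) 1, 0 ≤ p.eval x) ↔
      ∃ a b : Polynomial ℝ,
        a.degree ≤ (k : ℕ) ∧ b.degree ≤ (k : ℕ) ∧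
        p = X * a ^ 2 + (1 - X) * b ^ 2 := by
  constructor
  · intro hpos
    by_cases hp0 : p = 0
    · exact ⟨0, 0, by simp, by simp, by rw [hp0]; ring⟩
    have hnd : p.natDegree ≤ 2 * k + 1 := natDegree_le_iff_degree_le.2 hdeg
    rcases ML_main p.natDegree p le_rfl hp0 hpos with ⟨he, hE⟩ | ⟨ho, hO⟩
    · obtain ⟨m, hm⟩ := he
      exact (hE.toO).mono (by omega)
    · obtain ⟨m, hm⟩ := ho
      exact hO.mono (by omega)
  · rintro ⟨a, b, ha, hb, rfl⟩ x ⟨hx0, hx1⟩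
    simp only [eval_add, eval_mul, eval_pow, eval_sub, eval_one, eval_X]
    nlinarith [sq_nonneg (a.eval x), sq_nonneg (b.eval x)]
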